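/- The Dahmen–Micchelli space DM(X) is contained in F(X), and if X generates a pointed cone then the partition function P_X belongs to F(X). -/

import Mathlib

open Function

attribute [local instance] Classical.propDecidable

noncomputable section

/-- The lattice `Γ = ι → ℤ`. -/
abbrev ZLat (ι : Type*) := ι → ℤ
/-- The ambient real vector space `V = Γ ⊗ ℝ = ι → ℝ`. -/
abbrev Amb (ι : Type*) := ι → ℝ

variable {ι : Type*} [Fintype ι]

/-- Embedding of the lattice into the ambient space. -/
def castV (γ : ZLat ι) : Amb ι := fun i => (γ i : ℝ)

/-- Standard pairing on `V`. -/
def dotR (u v : Amb ι) : ℝ := ∑ i, u i * v i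

/-- The difference operator `∇ₐ`. -/
def nab (a : ZLat ι) (f : ZLat ι → ℤ) : ZLat ι → ℤ := fun b => f b - f (b - a)

/-- `∇_Y = ∏_{a ∈ Y} ∇ₐ` for a list `Y`. -/
def nabL (Y : List (ZLat ι)) (f : ZLat ι → ℤ) : ZLat ι → ℤ := Y.foldr nab f

/-- Delta function at `0`. -/
def delta0 : ZLat ι → ℤ := fun γ => if γ = 0 then 1 else 0

/-- The partition function of a list `Y`: the number of ways of writing `γ` as a
nonnegative integral combination of the entries of `Y`. -/
def partFn (Y : List (ZLat ι)) : ZLat ι → ℤ :=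
  fun γ => Nat.card {k : Fin Y.length → ℕ // ∑ i, (k i : ℤ) • Y.get i = γ}

/-- The cone `C(Y)` of nonnegative real combinations of the entries of `Y`. -/
def coneC (Y : List (ZLat ι)) : Set (Amb ι) :=
  {v | ∃ t : Fin Y.length → ℝ, (∀ i, 0 ≤ t i) ∧ v = ∑ i, t i • castV (Y.get i)}

/-- `C(Y)` is pointed: it contains no line. -/
def PointedList (Y : List (ZLat ι)) : Prop :=
  ∀ v ∈ coneC Y, -v ∈ coneC Y → v = 0

/-- The zonotope `B(Y) = {∑ tᵢ aᵢ : 0 ≤ tᵢ ≤ 1}`. -/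
def zono (Y : List (ZLat ι)) : Set (Amb ι) :=
  {v | ∃ t : Fin Y.length → ℝ, (∀ i, 0 ≤ t i ∧ t i ≤ 1) ∧ v = ∑ i, t i • castV (Y.get i)}

/-- The real span of a list of lattice vectors. -/
def spanOf (Y : List (ZLat ι)) : Submodule ℝ (Amb ι) :=
  Submodule.span ℝ (castV '' {a | a ∈ Y})

/-- A subspace is rational (relative to `X`) if it is spanned by a sublist of `X`. -/
def IsRational (X : List (ZLat ι)) (r : Submodule ℝ (Amb ι)) : Prop :=
  ∃ Y : List (ZLat ι), (∀ a ∈ Y, a ∈ X) ∧ r = spanOf Y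

/-- The sublist `X ∩ r`. -/
def inSub (X : List (ZLat ι)) (r : Submodule ℝ (Amb ι)) : List (ZLat ι) :=
  X.filter (fun a => decide (castV a ∈ r))

/-- The sublist `X \ r`. -/
def outSub (X : List (ZLat ι)) (r : Submodule ℝ (Amb ι)) : List (ZLat ι) :=
  X.filter (fun a => decide (castV a ∉ r))

/-- The operator `∇_{X \ r}`. -/
def nabOut (X : List (ZLat ι)) (r : Submodule ℝ (Amb ι)) (f : ZLat ι → ℤ) : ZLat ι → ℤ :=
  nabL (outSub X r) f

/-- The space `𝓕(X)`: `∇_{X\r} f` is supported on `Γ ∩ r` for every rational `r`. -/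
def memF (X : List (ZLat ι)) (f : ZLat ι → ℤ) : Prop :=
  ∀ r, IsRational X r → support (nabOut X r f) ⊆ {γ | castV γ ∈ r}

/-- The Dahmen–Micchelli space of a list `Y` (inside its span): `f` is killed by
`∇_{Y \ H}` for every rational hyperplane `H` of the span of `Y`. -/
def memDM (Y : List (ZLat ι)) (f : ZLat ι → ℤ) : Prop :=
  ∀ H, IsRational Y H → Module.finrank ℝ H + 1 = Module.finrank ℝ (spanOf Y) →
    nabOut Y H f = 0

/-- `𝓕(X ∩ r)`, viewed as functions on `Γ` supported on `Γ ∩ r`. -/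
def memFrel (X : List (ZLat ι)) (r : Submodule ℝ (Amb ι)) (g : ZLat ι → ℤ) : Prop :=
  support g ⊆ {γ | castV γ ∈ r} ∧ memF (inSub X r) g

/-- `DM(X ∩ r)`, viewed as functions on `Γ` supported on `Γ ∩ r`. -/
def memDMrel (X : List (ZLat ι)) (r : Submodule ℝ (Amb ι)) (g : ZLat ι → ℤ) : Prop :=
  support g ⊆ {γ | castV γ ∈ r} ∧ memDM (inSub X r) g

/-- `u` is a regular vector for `X \ r`:  `u ∈ r^⊥` and `⟨u, a⟩ ≠ 0` for all `a ∈ X \ r`.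
It determines the regular face `F` containing it. -/
def Reg (X : List (ZLat ι)) (r : Submodule ℝ (Amb ι)) (u : Amb ι) : Prop :=
  (∀ v ∈ r, dotR u v = 0) ∧ ∀ a ∈ X, castV a ∉ r → dotR u (castV a) ≠ 0

/-- The sublist `B ⊆ X \ r` of elements negative on `u`. -/
def negPart (X : List (ZLat ι)) (r : Submodule ℝ (Amb ι)) (u : Amb ι) : List (ZLat ι) :=
  (outSub X r).filter (fun a => decide (dotR u (castV a) < 0))

/-- The list `[A, -B]`: entries of `X \ r`, with sign flipped on the part negative on `u`. -/
def signedOut (X : List (ZLat ι)) (r : Submodule ℝ (Amb ι)) (u : Amb ι) : List (ZLat ι) :=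
  (outSub X r).map (fun a => if 0 < dotR u (castV a) then a else -a)

/-- The special function `𝓟_{X\r}^F` for the face `F ∋ u`:
`(-1)^{|B|} τ_{-∑_{b∈B} b} (∏_{a∈A} ∑_k δ_{ka}) * (∏_{b∈B} ∑_k δ_{-kb})`. -/
def PF (X : List (ZLat ι)) (r : Submodule ℝ (Amb ι)) (u : Amb ι) : ZLat ι → ℤ :=
  fun γ => (-1) ^ (negPart X r u).length *
    partFn (signedOut X r u) (γ + (negPart X r u).sum)

/-- The support region `-∑_{b∈B} b + C(A, -B)` of `𝓟_{X\r}^F`, as a subset of `Γ`. -/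
def PFsupp (X : List (ZLat ι)) (r : Submodule ℝ (Amb ι)) (u : Amb ι) : Set (ZLat ι) :=
  {γ | castV (γ + (negPart X r u).sum) ∈ coneC (signedOut X r u)}

/-- Convolution of two functions on the lattice. -/
def conv (f g : ZLat ι → ℤ) : ZLat ι → ℤ := fun γ => ∑ᶠ μ, f (γ - μ) * g μ

/-- The union of all rational hyperplanes (inside the span of `Y`). -/
def hyperUnion (Y : List (ZLat ι)) : Set (Amb ι) :=
  {v | ∃ H, IsRational Y H ∧ Module.finrank ℝ H + 1 = Module.finrank ℝ (spanOf Y) ∧ v ∈ H}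

/-- A tope for `Y`: a connected component of the complement (in the span of `Y`) of the
union of the hyperplanes spanned by sublists of `Y`. -/
def IsTope (Y : List (ZLat ι)) (τ : Set (Amb ι)) : Prop :=
  ∃ v ∈ (spanOf Y : Set (Amb ι)) \ hyperUnion Y,
    τ = connectedComponentIn ((spanOf Y : Set (Amb ι)) \ hyperUnion Y) v

/-- The set of singular vectors: the union of the cones `C(Y)` over sublists `Y` of `X`
not spanning `V`. -/
def singSet (X : List (ZLat ι)) : Set (Amb ι) :=
  {v | ∃ Y : List (ZLat ι), (∀ a ∈ Y, a ∈ X) ∧ spanOf Y ≠ ⊤ ∧ v ∈ coneC Y}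

/-- A big cell: a connected component of the complement of the set of singular vectors. -/
def IsBigCell (X : List (ZLat ι)) (c : Set (Amb ι)) : Prop :=
  ∃ v ∈ (singSet X)ᶜ, c = connectedComponentIn (singSet X)ᶜ v

/-- Minkowski difference of sets, `A - B`. -/
def sdiffSet (A B : Set (Amb ι)) : Set (Amb ι) := {x | ∃ a ∈ A, ∃ b ∈ B, x = a - b}

section Aux
variable {ι : Type*} [Fintype ι]

lemma nab_comm (a b : ZLat ι) (f : ZLat ι → ℤ) : nab a (nab b f) = nab b (nab a f) := by
  funext c
  simp only [nab]
  rw [sub_right_comm c a b]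
  ring

instance : LeftCommutative (nab (ι := ι)) := ⟨nab_comm⟩

lemma nab_zero (a : ZLat ι) : nab a (0 : ZLat ι → ℤ) = 0 := by
  funext c; simp [nab]

lemma nabL_zero (L : List (ZLat ι)) : nabL L (0 : ZLat ι → ℤ) = 0 := by
  induction L with
  | nil => rfl
  | cons a L ih => simp only [nabL, List.foldr_cons] at *; rw [ih, nab_zero]

lemma nabL_append (A B : List (ZLat ι)) (f : ZLat ι → ℤ) :
    nabL (A ++ B) f = nabL A (nabL B f) := List.foldr_append

lemma nabL_perm {A B : List (ZLat ι)} (h : A.Perm B) (f : ZLat ι → ℤ) :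
    nabL A f = nabL B f := h.foldr_eq f

lemma nabL_nab (a : ZLat ι) (L : List (ZLat ι)) (f : ZLat ι → ℤ) :
    nab a (nabL L f) = nabL L (nab a f) := by
  induction L with
  | nil => rfl
  | cons b L ih => simp only [nabL, List.foldr_cons] at *; rw [nab_comm, ih]

lemma castV_zero_iff (a : ZLat ι) : castV a = 0 ↔ a = 0 := by
  constructor
  · intro h; funext j
    have := congrFun h j
    simpa [castV] using this
  · rintro rfl; funext j; simp [castV]

lemma castV_sum {κ : Type*} (s : Finset κ) (c : κ → ℤ) (v : κ → ZLat ι) :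
    castV (∑ i ∈ s, c i • v i) = ∑ i ∈ s, (c i : ℝ) • castV (v i) := by
  funext j
  simp only [castV, Finset.sum_apply, Pi.smul_apply, smul_eq_mul]
  push_cast
  rfl

end Aux
set_option linter.unusedSectionVars false

section Aux2
variable {ι : Type*} [Fintype ι]

lemma coneC_zero (Y : List (ZLat ι)) : (0 : Amb ι) ∈ coneC Y :=
  ⟨0, fun _ => le_refl _, by simp⟩

lemma coneC_smul {Y : List (ZLat ι)} {a : ZLat ι} (ha : a ∈ Y) {t : ℝ} (ht : 0 ≤ t) :
    t • castV a ∈ coneC Y := by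
  obtain ⟨n, hn⟩ := List.mem_iff_get.mp ha
  have hn' : Y[(n : ℕ)] = a := hn
  refine ⟨fun i => if i = n then t else 0, fun i => by positivity, ?_⟩
  simp [ite_smul, Finset.sum_ite_eq', hn']

lemma coneC_add {Y : List (ZLat ι)} {v w : Amb ι} (hv : v ∈ coneC Y) (hw : w ∈ coneC Y) :
    v + w ∈ coneC Y := by
  obtain ⟨t, ht, rfl⟩ := hv
  obtain ⟨s, hs, rfl⟩ := hw
  exact ⟨t + s, fun i => add_nonneg (ht i) (hs i), by simp [add_smul, Finset.sum_add_distrib]⟩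

instance instOfNatLenCons0 {α : Type*} (a : α) (Y : List α) :
    OfNat (Fin (a::Y).length) 0 := ⟨(0 : Fin (Y.length + 1))⟩

lemma coneC_mono {Y X : List (ZLat ι)} (h : ∀ a ∈ Y, a ∈ X) : coneC Y ⊆ coneC X := by
  induction Y with
  | nil =>
    rintro v ⟨t, _, rfl⟩
    simpa using coneC_zero X
  | cons a Y ih =>
    rintro v ⟨t, ht, rfl⟩
    have hsum : (∑ i : Fin (a::Y).length, t i • castV ((a::Y).get i))
        = t 0 • castV a + ∑ i : Fin Y.length, t i.succ • castV (Y.get i) := by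
      exact Fin.sum_univ_succ _
    rw [hsum]
    refine coneC_add (coneC_smul (h a List.mem_cons_self) (ht 0)) ?_
    exact ih (fun b hb => h b (List.mem_cons_of_mem _ hb))
      ⟨fun i => t i.succ, fun i => ht _, rfl⟩

lemma pointed_sublist {X Y : List (ZLat ι)} (hX : PointedList X) (h : ∀ a ∈ Y, a ∈ X) :
    PointedList Y := fun v hv hv' => hX v (coneC_mono h hv) (coneC_mono h hv')

/-- The set of representations of `γ` by the list `Y`. -/
abbrev RepSet (Y : List (ZLat ι)) (γ : ZLat ι) : Type _ :=
  {k : Fin Y.length → ℕ // ∑ i, (k i : ℤ) • Y.get i = γ}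

lemma partFn_eq (Y : List (ZLat ι)) (γ : ZLat ι) : partFn Y γ = Nat.card (RepSet Y γ) := rfl

lemma sum_cons (a : ZLat ι) (Y : List (ZLat ι)) (k : Fin (a::Y).length → ℕ) :
    ∑ i, (k i : ℤ) • (a::Y).get i
      = (k 0 : ℤ) • a + ∑ i : Fin Y.length, (k i.succ : ℤ) • Y.get i := by
  exact Fin.sum_univ_succ _

/-- Representations of `γ` by `a :: Y` decompose according to the multiplicity of `a`. -/
def repConsEquiv (a : ZLat ι) (Y : List (ZLat ι)) (γ : ZLat ι) :
    RepSet (a::Y) γ ≃ Σ k0 : ℕ, RepSet Y (γ - (k0 : ℤ) • a) where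
  toFun k := ⟨k.1 0, Fin.tail k.1, by
    have h := k.2
    rw [sum_cons] at h
    exact eq_sub_iff_add_eq'.mpr h⟩
  invFun p := ⟨Fin.cons p.1 p.2.1, by
    rw [sum_cons]
    simp only [Fin.cons_zero, Fin.cons_succ]
    rw [p.2.2]
    abel⟩
  left_inv k := by
    ext : 1
    exact Fin.cons_self_tail k.1
  right_inv := by
    rintro ⟨k0, k, hk⟩
    have h2 : Fin.tail (Fin.cons (α := fun _ : Fin (Y.length + 1) => ℕ) k0 k) = k :=
      Fin.tail_cons _ _
    exact Sigma.ext rfl (heq_of_eq (Subtype.ext h2))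

end Aux2
section Aux3
variable {ι : Type*} [Fintype ι]

lemma castV_zero : castV (0 : ZLat ι) = 0 := (castV_zero_iff 0).mpr rfl

lemma repSet_finite {Z : List (ZLat ι)} (hP : PointedList Z) (h0 : ∀ a ∈ Z, a ≠ 0)
    (γ : ZLat ι) : Finite (RepSet Z γ) := by
  by_contra hinf
  rw [not_finite_iff_infinite] at hinf
  set e := hinf.natEmbedding (RepSet Z γ) with he
  set f : ℕ → (Fin Z.length → ℕ) := fun n => (e n).1 with hf
  have hPWO : (Set.univ : Set (Fin Z.length → ℕ)).IsPWO :=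
    Set.isPWO_of_wellQuasiOrderedLE _
  obtain ⟨m, n, hmn, hle⟩ := Set.PartiallyWellOrderedOn.exists_lt hPWO (f := f) (fun _ => Set.mem_univ _)
  have hne : f m ≠ f n := by
    intro h
    exact absurd (e.injective (Subtype.ext h)) (Nat.ne_of_lt hmn)
  -- find a coordinate where f m < f n
  have : ∃ j, f m j < f n j := by
    by_contra hc
    push_neg at hc
    exact hne (funext fun j => le_antisymm (hle j) (hc j))
  obtain ⟨j, hj⟩ := this
  set d : Fin Z.length → ℤ := fun i => (f n i : ℤ) - (f m i : ℤ) with hd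
  have hd0 : ∀ i, 0 ≤ d i := fun i => by
    simp only [hd, sub_nonneg, Int.ofNat_le]
    exact hle i
  have hsum : ∑ i, d i • Z.get i = 0 := by
    have h1 := (e m).2
    have h2 := (e n).2
    simp only [hd, sub_smul, Finset.sum_sub_distrib]
    rw [h1, h2]
    abel
  have hcast : ∑ i, ((d i : ℝ)) • castV (Z.get i) = 0 := by
    rw [← castV_sum Finset.univ d (fun i => Z.get i), hsum, castV_zero]
  set v : Amb ι := (d j : ℝ) • castV (Z.get j) with hv
  have hvmem : v ∈ coneC Z :=
    coneC_smul (show Z.get j ∈ Z by exact List.get_mem Z j) (by exact_mod_cast hd0 j)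
  have hnegmem : -v ∈ coneC Z := by
    refine ⟨fun i => if i = j then 0 else (d i : ℝ), fun i => ?_, ?_⟩
    · dsimp only
      split
      · exact le_refl _
      · exact_mod_cast hd0 i
    · have h2 : ∀ i : Fin Z.length, (if i = j then 0 else (d i : ℝ)) • castV (Z.get i)
          = (d i : ℝ) • castV (Z.get i) - (if i = j then (d i : ℝ) else 0) • castV (Z.get i) := by
        intro i; split <;> simp
      rw [Finset.sum_congr rfl fun i _ => h2 i, Finset.sum_sub_distrib, hcast]
      simp [ite_smul, Finset.sum_ite_eq', hv]
  have hv0 : v = 0 := hP v hvmem hnegmem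
  rw [hv, smul_eq_zero] at hv0
  rcases hv0 with h | h
  · have : d j ≠ 0 := by
      have : 0 < d j := by simp only [hd, sub_pos]; exact_mod_cast hj
      omega
    exact this (by exact_mod_cast h)
  · exact h0 (Z.get j) (List.get_mem Z j) ((castV_zero_iff _).mp h)

end Aux3
section Aux4
variable {ι : Type*} [Fintype ι]

/-- Swap the two outer layers of a double sigma. -/
def sigmaSwapEquiv {α β : Type*} (F : α → β → Type*) :
    (Σ a : α, Σ b : β, F a b) ≃ Σ b : β, Σ a : α, F a b where
  toFun p := ⟨p.2.1, p.1, p.2.2⟩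
  invFun p := ⟨p.2.1, p.1, p.2.2⟩
  left_inv p := rfl
  right_inv p := rfl

lemma repSet_cons_zero_finite {a : ZLat ι} {Z : List (ZLat ι)}
    (hfin : ∀ δ : ZLat ι, Finite (RepSet (a::Z) δ)) (δ : ZLat ι) : Finite (RepSet Z δ) := by
  have hinj : Function.Injective (fun k : RepSet Z δ =>
      (⟨Fin.cons 0 k.1, by
        rw [sum_cons]
        simp only [Fin.cons_zero, Fin.cons_succ, Nat.cast_zero, zero_smul, zero_add]
        exact k.2⟩ : RepSet (a::Z) δ)) := by
    intro k k' h
    have := congrArg (fun s : RepSet (a::Z) δ => Fin.tail s.1) h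
    simpa only [Fin.tail_cons] using Subtype.ext this
  exact Finite.of_injective _ hinj

lemma nab_partFn {a : ZLat ι} {Z : List (ZLat ι)}
    (hfin : ∀ δ : ZLat ι, Finite (RepSet (a::Z) δ)) :
    nab a (partFn (a::Z)) = partFn Z := by
  have hfinZ := repSet_cons_zero_finite hfin
  funext γ
  have e1 : RepSet (a::Z) γ ≃ RepSet Z γ ⊕ RepSet (a::Z) (γ - a) := by
    refine (repConsEquiv a Z γ).trans ?_
    refine (Equiv.sigmaNatSucc fun k0 => RepSet Z (γ - (k0 : ℤ) • a)).trans ?_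
    refine Equiv.sumCongr (Equiv.subtypeEquivRight fun k => by norm_num) ?_
    refine (Equiv.sigmaCongrRight fun k0 => Equiv.subtypeEquivRight fun k => ?_).trans
      (repConsEquiv a Z (γ - a)).symm
    have : γ - ((k0 + 1 : ℕ) : ℤ) • a = γ - a - (k0 : ℤ) • a := by
      push_cast
      rw [add_smul, one_smul]
      abel
    rw [this]
  have hcard : partFn (a::Z) γ
      = (Nat.card (RepSet Z γ) : ℤ) + Nat.card (RepSet (a::Z) (γ - a)) := by
    rw [partFn_eq, Nat.card_congr e1]
    haveI := hfinZ γ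
    haveI := hfin (γ - a)
    rw [Nat.card_sum]
    push_cast
    ring
  show partFn (a::Z) γ - partFn (a::Z) (γ - a) = partFn Z γ
  rw [hcard, partFn_eq, partFn_eq]
  ring

lemma repSet_perm {Y Y' : List (ZLat ι)} (h : Y.Perm Y') (γ : ZLat ι) :
    Nonempty (RepSet Y γ ≃ RepSet Y' γ) := by
  induction h generalizing γ with
  | nil => exact ⟨Equiv.refl _⟩
  | cons a h ih =>
    exact ⟨(repConsEquiv a _ γ).trans
      ((Equiv.sigmaCongrRight fun k0 => (ih _).some).trans (repConsEquiv a _ γ).symm)⟩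
  | swap a b L =>
    refine ⟨(repConsEquiv b _ γ).trans <| (Equiv.sigmaCongrRight fun k0 =>
        repConsEquiv a _ _).trans <| (sigmaSwapEquiv _).trans <|
        (Equiv.sigmaCongrRight fun k0 => (Equiv.sigmaCongrRight fun k1 =>
          Equiv.subtypeEquivRight fun k => by rw [sub_right_comm]).trans
          (repConsEquiv b _ _).symm).trans (repConsEquiv a _ γ).symm⟩
  | trans h1 h2 ih1 ih2 =>
    exact ⟨(ih1 γ).some.trans ((ih2 γ).some)⟩

lemma partFn_perm {Y Y' : List (ZLat ι)} (h : Y.Perm Y') : partFn Y = partFn Y' := by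
  funext γ
  rw [partFn_eq, partFn_eq, Nat.card_congr (repSet_perm h γ).some]

lemma nabL_partFn (X : List (ZLat ι))
    (hfin : ∀ Z : List (ZLat ι), (∀ a ∈ Z, a ∈ X) → ∀ δ : ZLat ι, Finite (RepSet Z δ)) :
    ∀ A B : List (ZLat ι), (∀ a ∈ A ++ B, a ∈ X) → nabL A (partFn (A ++ B)) = partFn B := by
  intro A
  induction A with
  | nil => intro B _; rfl
  | cons a A ih =>
    intro B hAB
    have hmem : ∀ c ∈ a :: (A ++ B), c ∈ X := hAB
    calc nabL (a::A) (partFn ((a::A) ++ B))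
        = nab a (nabL A (partFn (a :: (A ++ B)))) := rfl
      _ = nabL A (nab a (partFn (a :: (A ++ B)))) := nabL_nab a A _
      _ = nabL A (partFn (A ++ B)) := by
          rw [nab_partFn (fun δ => hfin _ hmem δ)]
      _ = partFn B := ih B (fun c hc => hmem c (List.mem_cons_of_mem a hc))
end Aux4
section Aux5
variable {ι : Type*} [Fintype ι]

lemma spanOf_append (Y Z : List (ZLat ι)) :
    spanOf (Y ++ Z) = spanOf Y ⊔ spanOf Z := by
  simp only [spanOf]
  rw [← Submodule.span_union, ← Set.image_union]
  congr 1
  ext x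
  simp [List.mem_append]

lemma spanOf_singleton (a : ZLat ι) : spanOf [a] = Submodule.span ℝ {castV a} := by
  simp only [spanOf]
  congr 1
  ext x
  simp

lemma spanOf_le_of_forall_mem {Y : List (ZLat ι)} {r : Submodule ℝ (Amb ι)}
    (h : ∀ a ∈ Y, castV a ∈ r) : spanOf Y ≤ r := by
  rw [spanOf, Submodule.span_le]
  rintro _ ⟨a, ha, rfl⟩
  exact h a ha

lemma exists_rational_hyperplane (X : List (ZLat ι)) (hspan : spanOf X = ⊤) :
    ∀ (d : ℕ) (r : Submodule ℝ (Amb ι)), IsRational X r → r ≠ ⊤ →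
      Module.finrank ℝ (Amb ι) ≤ Module.finrank ℝ r + d →
      ∃ H, IsRational X H ∧ r ≤ H ∧
        Module.finrank ℝ H + 1 = Module.finrank ℝ (Amb ι) := by
  intro d
  induction d with
  | zero =>
    intro r hrat hne hle
    have := Submodule.finrank_lt (K := ℝ) (V := Amb ι) hne
    omega
  | succ d ih =>
    intro r hrat hne hle
    have hlt := Submodule.finrank_lt (K := ℝ) (V := Amb ι) hne
    by_cases hcase : Module.finrank ℝ r + 1 = Module.finrank ℝ (Amb ι)
    · exact ⟨r, hrat, le_refl _, hcase⟩
    · obtain ⟨Y, hY, rfl⟩ := hrat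
      have hex : ∃ a ∈ X, castV a ∉ spanOf Y := by
        by_contra hc
        push_neg at hc
        have : spanOf X ≤ spanOf Y := spanOf_le_of_forall_mem hc
        rw [hspan, top_le_iff] at this
        exact hne this
      obtain ⟨a, haX, ha⟩ := hex
      set r' := spanOf (Y ++ [a]) with hr'
      have hr'eq : r' = spanOf Y ⊔ Submodule.span ℝ {castV a} := by
        rw [hr', spanOf_append, spanOf_singleton]
      have hrat' : IsRational X r' :=
        ⟨Y ++ [a], fun b hb => by
          rcases List.mem_append.mp hb with h | h
          · exact hY b h
          · rw [List.mem_singleton.mp h]; exact haX, rfl⟩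
      have hle' : spanOf Y ≤ r' := by rw [hr'eq]; exact le_sup_left
      have hlt' : spanOf Y < r' := by
        refine lt_of_le_of_ne hle' fun h => ha ?_
        rw [h, hr'eq]
        exact SetLike.le_def.mp le_sup_right (Submodule.mem_span_singleton_self (castV a))
      have hfr1 : Module.finrank ℝ (spanOf Y) < Module.finrank ℝ r' :=
        Submodule.finrank_lt_finrank_of_lt hlt'
      have hfr2 : Module.finrank ℝ r' ≤ Module.finrank ℝ (spanOf Y) + 1 := by
        rw [hr'eq]
        have h3 := Submodule.finrank_sup_add_finrank_inf_eq (spanOf Y)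
          (Submodule.span ℝ {castV a})
        have h4 : Module.finrank ℝ (Submodule.span ℝ {castV a}) ≤ 1 := by
          rcases eq_or_ne (castV a) 0 with h | h
          · rw [h, Submodule.span_zero_singleton]
            simp
          · rw [finrank_span_singleton h]
        omega
      have hne' : r' ≠ ⊤ := by
        intro h
        rw [h, finrank_top] at hfr2
        omega
      obtain ⟨H, h1, h2, h3⟩ := ih r' hrat' hne' (by omega)
      exact ⟨H, h1, le_trans hle' h2, h3⟩

end Aux5
section Main
variable {ι : Type*} [Fintype ι]

lemma outSub_perm_of_le {X : List (ZLat ι)} {r H : Submodule ℝ (Amb ι)} (hrH : r ≤ H) :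
    ∃ D : List (ZLat ι), (outSub X r).Perm (D ++ outSub X H) := by
  set p : ZLat ι → Bool := fun a => decide (castV a ∉ r) with hp
  set q : ZLat ι → Bool := fun a => decide (castV a ∉ H) with hq
  have h1 := List.filter_append_perm q (X.filter p)
  rw [List.filter_filter, List.filter_filter] at h1
  have h2 : X.filter (fun a => q a && p a) = X.filter q := by
    refine List.filter_congr fun a _ => ?_
    by_cases h : castV a ∈ H
    · have : q a = false := by simp [hq, h]
      rw [this]; simp
    · have hqa : q a = true := by simp [hq, h]
      have hpa : p a = true := by
        simp only [hp, decide_eq_true_eq]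
        exact fun hr => h (hrH hr)
      rw [hqa, hpa]
      rfl
  rw [h2] at h1
  refine ⟨X.filter (fun a => (!q a) && p a), ?_⟩
  have h3 : (X.filter q ++ X.filter fun a => (!q a) && p a).Perm
      (X.filter (fun a => (!q a) && p a) ++ X.filter q) := List.perm_append_comm
  exact (h1.symm.trans h3).trans (List.Perm.refl _)

lemma outSub_top (X : List (ZLat ι)) : outSub X (⊤ : Submodule ℝ (Amb ι)) = [] :=
  List.filter_eq_nil_iff.mpr fun a _ => by simp

theorem DM_subset_F_and_partFn_memF' (X : List (ZLat ι))
    (hX0 : ∀ a ∈ X, a ≠ 0) (hspan : spanOf X = ⊤) :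
    (∀ f : ZLat ι → ℤ, memDM X f → memF X f) ∧
    (PointedList X → memF X (partFn X)) := by
  constructor
  · intro f hf r hr
    rcases eq_or_ne r ⊤ with rfl | hne
    · intro γ _
      show castV γ ∈ (⊤ : Submodule ℝ (Amb ι))
      exact Submodule.mem_top
    · obtain ⟨H, hHrat, hrH, hHrank⟩ := exists_rational_hyperplane X hspan
        (Module.finrank ℝ (Amb ι)) r hr hne (by omega)
      have hDM : nabOut X H f = 0 := hf H hHrat (by rw [hspan, finrank_top]; exact hHrank)
      obtain ⟨D, hperm⟩ := outSub_perm_of_le (X := X) hrH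
      have hzero : nabOut X r f = 0 := by
        show nabL (outSub X r) f = 0
        rw [nabL_perm hperm f, nabL_append]
        rw [show nabL (outSub X H) f = 0 from hDM, nabL_zero]
      intro γ hγ
      rw [hzero] at hγ
      simp at hγ
  · intro hpointed r _
    have hfin : ∀ Z : List (ZLat ι), (∀ a ∈ Z, a ∈ X) → ∀ δ : ZLat ι,
        Finite (RepSet Z δ) := fun Z hZ δ =>
      repSet_finite (pointed_sublist hpointed hZ) (fun a ha => hX0 a (hZ a ha)) δ
    have hpermX : X.Perm (outSub X r ++ inSub X r) := by
      have h1 := List.filter_append_perm (fun a => decide (castV a ∉ r)) X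
      have h2 : (X.filter fun a => !decide (castV a ∉ r)) = inSub X r := by
        refine List.filter_congr fun a _ => ?_
        simp [decide_not]
      rw [h2] at h1
      exact h1.symm
    have hkey : nabOut X r (partFn X) = partFn (inSub X r) := by
      show nabL (outSub X r) (partFn X) = _
      rw [partFn_perm hpermX]
      exact nabL_partFn X hfin _ _ fun a ha => (hpermX.mem_iff).mpr ha
    intro γ hγ
    rw [hkey] at hγ
    have hne : partFn (inSub X r) γ ≠ 0 := hγ
    have hno : Nonempty (RepSet (inSub X r) γ) := by
      by_contra hc
      rw [not_nonempty_iff] at hc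
      refine hne ?_
      rw [partFn_eq, Nat.card_of_isEmpty]
      rfl
    obtain ⟨⟨k, hk⟩⟩ := hno
    show castV γ ∈ r
    rw [← hk, castV_sum]
    refine Submodule.sum_mem _ fun i _ => Submodule.smul_mem _ _ ?_
    have hmem := List.get_mem (inSub X r) i
    have hfil := List.mem_filter.mp hmem
    exact of_decide_eq_true hfil.2

end Main

/-- `DM(X) ⊆ 𝓕(X)`, and if `X` generates a pointed cone then the partition function `𝓟_X`
belongs to `𝓕(X)`. -/
theorem DM_subset_F_and_partFn_memF {ι : Type*} [Fintype ι] (X : List (ZLat ι))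
    (hX0 : ∀ a ∈ X, a ≠ 0) (hspan : spanOf X = ⊤) :
    (∀ f : ZLat ι → ℤ, memDM X f → memF X f) ∧
    (PointedList X → memF X (partFn X)) := by
  exact DM_subset_F_and_partFn_memF' X hX0 hspan
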